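/- arXiv:1912.01195 — 2 statements merged into one kernel-verified Lean document; each statement's English description precedes it below -/
import Mathlib

section
/- For all integers R ≥ 2 and M ≥ R there exist disjoint finite sets F and C with |F| = 2R and |C| = (M + R)·R, and a metric d on F ∪ C, such that: (a) SC-LP(1, 2R − 1) has a feasible fractional solution; and (b) every star cover of (F, C) of size at most 2R − 1 has load at least R. Consequently, for ε = 1/(2R), every star cover of size at most (1 + ε)·(2R − 1) has load at least R ≥ (1/(2ε)) times the optimal fractional load. -/
open scoped NNReal
open Finset


/-- A star cover of `(F, C)`: a finite collection of pairwise disjoint stars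
`(f, C_f)` with `f ∈ F`, `C_f ⊆ C`, whose client sets have union `C`. -/
structure StarCover {X : Type*} [MetricSpace X] (F C : Finset X) where
  stars : Finset (X × Finset X)
  fac_mem : ∀ p ∈ stars, p.1 ∈ F
  cli_sub : ∀ p ∈ stars, p.2 ⊆ C
  fac_inj : ∀ p ∈ stars, ∀ q ∈ stars, p ≠ q → p.1 ≠ q.1
  cli_disj : ∀ p ∈ stars, ∀ q ∈ stars, p ≠ q → Disjoint p.2 q.2
  covers : ∀ c ∈ C, ∃ p ∈ stars, c ∈ p.2

/-- The size of a star cover is its number of stars. -/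
def StarCover.size {X : Type*} [MetricSpace X] {F C : Finset X}
    (S : StarCover F C) : ℕ :=
  S.stars.card

/-- The load of a star cover: the maximum over its stars `(f, C_f)` of
`∑_{c ∈ C_f} d(f, c)`. -/
noncomputable def StarCover.load {X : Type*} [MetricSpace X] {F C : Finset X}
    (S : StarCover F C) : ℝ :=
  ((S.stars.sup fun p => ∑ c ∈ p.2, nndist p.1 c : ℝ≥0) : ℝ)

/-- Feasibility for the LP relaxation `SC-LP(T, k)` of the star cover problem. -/
def SCLPFeasible {X : Type*} [MetricSpace X] (F C : Finset X) (T : ℝ) (k : ℕ)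
    (x : X → X → ℝ) (y : X → ℝ) : Prop :=
  (∀ i ∈ F, ∀ j ∈ C, x i j ∈ Set.Icc (0 : ℝ) 1) ∧
  (∀ i ∈ F, y i ∈ Set.Icc (0 : ℝ) 1) ∧
  (∀ i ∈ F, ∑ j ∈ C, dist i j * x i j ≤ T * y i) ∧
  (∑ i ∈ F, y i ≤ (k : ℝ)) ∧
  (∀ j ∈ C, ∑ i ∈ F, x i j = 1) ∧
  (∀ i ∈ F, ∀ j ∈ C, x i j ≤ y i) ∧
  (∀ i ∈ F, ∀ j ∈ C, T < dist i j → x i j = 0)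

namespace MLKSC

variable (R M : ℕ)

def bigN : ℕ := (M + R) * R
def KK : ℕ := R * (M - R + 2)
def aG : ℕ := (KK R M + 1) / 2
def bG : ℕ := KK R M / 2
def szA (ℓ : ℕ) : ℕ := if ℓ = 0 then aG R M else R
def szB (ℓ : ℕ) : ℕ := if ℓ = 0 then bG R M else R

lemma KK_ge (hM : R ≤ M) : 2 * R ≤ KK R M := by
  unfold KK
  have : 2 ≤ M - R + 2 := by omega
  calc 2 * R = R * 2 := by ring
  _ ≤ R * (M - R + 2) := Nat.mul_le_mul_left _ this

lemma KK_le (hR : 2 ≤ R) (hM : R ≤ M) : KK R M ≤ bigN R M := by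
  unfold KK bigN
  have h1 : M - R + 2 ≤ M + R := by omega
  calc R * (M - R + 2) ≤ R * (M + R) := Nat.mul_le_mul_left _ h1
  _ = (M + R) * R := by ring

lemma sz_facts (hR : 2 ≤ R) (hM : R ≤ M) (ℓ : ℕ) :
    R ≤ szB R M ℓ ∧ szB R M ℓ ≤ szA R M ℓ ∧ szA R M ℓ ≤ szB R M ℓ + 1 ∧
      szA R M ℓ ≤ bigN R M ∧ szB R M ℓ ≤ bigN R M := by
  have h1 := KK_ge R M hM
  have h2 := KK_le R M hR hM
  unfold szA szB aG bG
  split <;> omega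

lemma sz_parity (hR : 2 ≤ R) (ℓ : ℕ) :
    szA R M ℓ = szB R M ℓ ∨ (szA R M ℓ = szB R M ℓ + 1 ∧ 3 ≤ R) := by
  unfold szA szB
  split
  · rcases Nat.even_or_odd (KK R M) with he | ho
    · obtain ⟨t, ht⟩ := he
      left; unfold aG bG; omega
    · right
      obtain ⟨t, ht⟩ := ho
      refine ⟨by unfold aG bG; omega, ?_⟩
      · have hRodd : Odd R := by
          have ho' : Odd (KK R M) := ⟨t, ht⟩
          unfold KK at ho'
          exact (Nat.odd_mul.mp ho').1
        rcases hRodd with ⟨t, ht⟩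
        omega
  · left; rfl

lemma szsum (hR : 2 ≤ R) (hM : R ≤ M) :
    ∑ ℓ ∈ range R, (szA R M ℓ + szB R M ℓ) = bigN R M := by
  have h0 : (0:ℕ) ∈ range R := by simp; omega
  rw [← Finset.add_sum_erase _ _ h0]
  have : ∀ ℓ ∈ (range R).erase 0, szA R M ℓ + szB R M ℓ = 2 * R := by
    intro ℓ hℓ
    have : ℓ ≠ 0 := (Finset.mem_erase.mp hℓ).1
    simp [szA, szB, this]; ring
  rw [Finset.sum_congr rfl this, Finset.sum_const, Finset.card_erase_of_mem h0,
    Finset.card_range, smul_eq_mul]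
  have hab : szA R M 0 + szB R M 0 = KK R M := by
    unfold szA szB aG bG; simp; omega
  rw [hab]
  obtain ⟨t, rfl⟩ : ∃ t, M = R + t := ⟨M - R, by omega⟩
  obtain ⟨s, rfl⟩ : ∃ s, R = s + 1 + 1 := ⟨R - 2, by omega⟩
  unfold KK bigN
  simp only [Nat.add_sub_cancel_left, Nat.add_sub_cancel]
  ring


noncomputable def al : ℝ := 1 / (2 * bigN R M * R)
noncomputable def DD (ℓ : ℕ) : ℝ := (R : ℝ) / (szB R M ℓ)
noncomputable def base (ℓ : ℕ) : ℝ := ℓ * (2 * R + 4)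
noncomputable def tau (j : ℕ) : ℝ := al R M * (j + 1) / (bigN R M + 2)
noncomputable def Th : ℝ := (2 * R - 1) / (2 * R)

lemma bigN_pos (hR : 2 ≤ R) (hM : R ≤ M) : 0 < bigN R M := by
  unfold bigN
  have : 0 < M + R := by omega
  exact Nat.mul_pos this (by omega)

lemma Rr_pos (hR : 2 ≤ R) : (0:ℝ) < R := by
  exact_mod_cast (by omega : 0 < R)

lemma Rr_two (hR : 2 ≤ R) : (2:ℝ) ≤ R := by exact_mod_cast hR

lemma bigNr_pos (hR : 2 ≤ R) (hM : R ≤ M) : (0:ℝ) < bigN R M := by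
  exact_mod_cast bigN_pos R M hR hM

lemma al_pos (hR : 2 ≤ R) (hM : R ≤ M) : 0 < al R M := by
  unfold al
  have h1 := bigNr_pos R M hR hM
  have h2 := Rr_pos R hR
  positivity

lemma szBr_pos (hR : 2 ≤ R) (hM : R ≤ M) (ℓ : ℕ) : (0:ℝ) < szB R M ℓ := by
  have h := (sz_facts R M hR hM ℓ).1
  have : 0 < szB R M ℓ := by omega
  exact_mod_cast this

lemma DD_pos (hR : 2 ≤ R) (hM : R ≤ M) (ℓ : ℕ) : 0 < DD R M ℓ := by
  unfold DD
  exact div_pos (Rr_pos R hR) (szBr_pos R M hR hM ℓ)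

lemma DD_le_one (hR : 2 ≤ R) (hM : R ≤ M) (ℓ : ℕ) : DD R M ℓ ≤ 1 := by
  unfold DD
  rw [div_le_one (szBr_pos R M hR hM ℓ)]
  exact_mod_cast (sz_facts R M hR hM ℓ).1

lemma al_lt_DD (hR : 2 ≤ R) (hM : R ≤ M) (ℓ : ℕ) : al R M < DD R M ℓ := by
  have hb := szBr_pos R M hR hM ℓ
  have hN := bigNr_pos R M hR hM
  have hR2 := Rr_two R hR
  have hbN : (szB R M ℓ : ℝ) ≤ bigN R M := by
    exact_mod_cast (sz_facts R M hR hM ℓ).2.2.2.2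
  unfold al DD
  rw [div_lt_div_iff₀ (by positivity) hb]
  have hRR : (4:ℝ) ≤ (R:ℝ) * R := by nlinarith
  have h4 : 2 * (bigN R M : ℝ) * 4 ≤ (R:ℝ) * (2 * bigN R M * R) := by
    nlinarith [mul_nonneg hN.le (sub_nonneg.mpr hRR)]
  linarith

lemma al_le_one (hR : 2 ≤ R) (hM : R ≤ M) : al R M ≤ 1 := by
  have hN := bigNr_pos R M hR hM
  have hR2 := Rr_two R hR
  unfold al
  rw [div_le_one (by positivity)]
  have hN1 : (1:ℝ) ≤ bigN R M := by exact_mod_cast bigN_pos R M hR hM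
  nlinarith

lemma szB_DD (hR : 2 ≤ R) (hM : R ≤ M) (ℓ : ℕ) : (szB R M ℓ : ℝ) * DD R M ℓ = R := by
  unfold DD
  rw [mul_comm]
  exact div_mul_cancel₀ _ (ne_of_gt (szBr_pos R M hR hM ℓ))

lemma tau_pos (hR : 2 ≤ R) (hM : R ≤ M) (j : ℕ) : 0 < tau R M j := by
  have := al_pos R M hR hM
  have hN := bigNr_pos R M hR hM
  unfold tau
  positivity

lemma tau_lt_al (hR : 2 ≤ R) (hM : R ≤ M) {j : ℕ} (hj : j ≤ bigN R M) :
    tau R M j < al R M := by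
  have ha := al_pos R M hR hM
  have hN := bigNr_pos R M hR hM
  unfold tau
  rw [div_lt_iff₀ (by positivity)]
  have : (j:ℝ) + 1 < (bigN R M : ℝ) + 2 := by
    have : (j:ℝ) ≤ bigN R M := by exact_mod_cast hj
    linarith
  nlinarith

lemma tau_inj (hR : 2 ≤ R) (hM : R ≤ M) {j k : ℕ} (h : tau R M j = tau R M k) : j = k := by
  have ha := al_pos R M hR hM
  have hN := bigNr_pos R M hR hM
  unfold tau at h
  field_simp at h
  exact_mod_cast (by linarith : (j:ℝ) = k)

lemma Th_lt_one (hR : 2 ≤ R) : Th R < 1 := by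
  have hR2 := Rr_two R hR
  unfold Th
  rw [div_lt_one (by linarith)]
  linarith

lemma Th_pos (hR : 2 ≤ R) : 0 < Th R := by
  have hR2 := Rr_two R hR
  unfold Th
  apply div_pos <;> linarith


noncomputable def ptA (ℓ : ℕ) : ℝ × ℝ := (base R ℓ, 0)
noncomputable def ptB (ℓ : ℕ) : ℝ × ℝ := (base R ℓ + DD R M ℓ + al R M, 0)
noncomputable def cA (ℓ j : ℕ) : ℝ × ℝ := (base R ℓ + al R M, tau R M j)
noncomputable def cB (ℓ j : ℕ) : ℝ × ℝ := (base R ℓ + DD R M ℓ, tau R M j)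

def isLoc (ℓ : ℕ) (q : ℝ × ℝ) : Prop := base R ℓ ≤ q.1 ∧ q.1 ≤ base R ℓ + 2

lemma isLoc_ptA (ℓ : ℕ) : isLoc R ℓ (ptA R ℓ) := by
  unfold isLoc ptA; constructor <;> simp <;> norm_num

lemma isLoc_ptB (hR : 2 ≤ R) (hM : R ≤ M) (ℓ : ℕ) : isLoc R ℓ (ptB R M ℓ) := by
  have h1 := DD_pos R M hR hM ℓ
  have h2 := DD_le_one R M hR hM ℓ
  have h3 := al_pos R M hR hM
  have h4 := al_le_one R M hR hM
  unfold isLoc ptB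
  constructor <;> simp <;> linarith

lemma isLoc_cA (hR : 2 ≤ R) (hM : R ≤ M) (ℓ j : ℕ) : isLoc R ℓ (cA R M ℓ j) := by
  have h3 := al_pos R M hR hM
  have h4 := al_le_one R M hR hM
  unfold isLoc cA
  constructor <;> simp <;> linarith

lemma isLoc_cB (hR : 2 ≤ R) (hM : R ≤ M) (ℓ j : ℕ) : isLoc R ℓ (cB R M ℓ j) := by
  have h1 := DD_pos R M hR hM ℓ
  have h2 := DD_le_one R M hR hM ℓ
  unfold isLoc cB
  constructor <;> simp <;> linarith

lemma base_nonneg (ℓ : ℕ) : 0 ≤ base R ℓ := by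
  unfold base; positivity

lemma dist_far (hR : 2 ≤ R) {ℓ ℓ' : ℕ} {p q : ℝ × ℝ}
    (hp : isLoc R ℓ p) (hq : isLoc R ℓ' q) (hne : ℓ ≠ ℓ') :
    2 * (R:ℝ) + 2 ≤ dist p q := by
  have hbase : 2 * (R:ℝ) + 4 ≤ |base R ℓ - base R ℓ'| := by
    unfold base
    rw [← sub_mul, abs_mul]
    have h1 : (1:ℝ) ≤ |(ℓ:ℝ) - (ℓ':ℝ)| := by
      have : ((ℓ:ℤ) - ℓ') ≠ 0 := by
        simp only [sub_ne_zero]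
        exact_mod_cast hne
      have h2 : (1:ℤ) ≤ |(ℓ:ℤ) - ℓ'| := Int.one_le_abs this
      have h3 : ((1:ℤ):ℝ) ≤ (|(ℓ:ℤ) - (ℓ':ℤ)| : ℝ) := by exact_mod_cast h2
      push_cast at h3 ⊢
      exact h3
    have h2 : |(2:ℝ) * R + 4| = 2 * R + 4 := by
      rw [abs_of_pos]; have := Rr_two R hR; linarith
    nlinarith [abs_nonneg ((ℓ:ℝ) - ℓ'), abs_nonneg ((2:ℝ) * R + 4)]
  have hfst : 2 * (R:ℝ) + 2 ≤ |p.1 - q.1| := by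
    obtain ⟨hp1, hp2⟩ := hp
    obtain ⟨hq1, hq2⟩ := hq
    rcases abs_cases (base R ℓ - base R ℓ') with ⟨heq, _⟩ | ⟨heq, _⟩ <;>
      rcases abs_cases (p.1 - q.1) with ⟨h2, _⟩ | ⟨h2, _⟩ <;> linarith
  calc 2 * (R:ℝ) + 2 ≤ |p.1 - q.1| := hfst
  _ = dist p.1 q.1 := (Real.dist_eq _ _).symm
  _ ≤ dist p q := by rw [Prod.dist_eq]; exact le_max_left _ _

lemma dist_pair (x1 y1 x2 y2 : ℝ) :
    dist ((x1, y1) : ℝ × ℝ) (x2, y2) = max |x1 - x2| |y1 - y2| := by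
  rw [Prod.dist_eq]; simp [Real.dist_eq]

lemma dist_A_cA (hR : 2 ≤ R) (hM : R ≤ M) {ℓ j : ℕ} (hj : j ≤ bigN R M) :
    dist (ptA R ℓ) (cA R M ℓ j) = al R M := by
  have h1 := tau_pos R M hR hM j
  have h2 := tau_lt_al R M hR hM hj
  have h3 := al_pos R M hR hM
  unfold ptA cA
  rw [dist_pair]
  have e1 : |base R ℓ - (base R ℓ + al R M)| = al R M := by
    rw [abs_sub_comm]; simp [abs_of_pos h3]
  have e2 : |(0:ℝ) - tau R M j| = tau R M j := by
    rw [abs_sub_comm]; simp [abs_of_pos h1]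
  rw [e1, e2, max_eq_left h2.le]

lemma dist_B_cB (hR : 2 ≤ R) (hM : R ≤ M) {ℓ j : ℕ} (hj : j ≤ bigN R M) :
    dist (ptB R M ℓ) (cB R M ℓ j) = al R M := by
  have h1 := tau_pos R M hR hM j
  have h2 := tau_lt_al R M hR hM hj
  have h3 := al_pos R M hR hM
  unfold ptB cB
  rw [dist_pair]
  have e1 : |base R ℓ + DD R M ℓ + al R M - (base R ℓ + DD R M ℓ)| = al R M := by
    have : base R ℓ + DD R M ℓ + al R M - (base R ℓ + DD R M ℓ) = al R M := by ring
    rw [this, abs_of_pos h3]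
  have e2 : |(0:ℝ) - tau R M j| = tau R M j := by
    rw [abs_sub_comm]; simp [abs_of_pos h1]
  rw [e1, e2, max_eq_left h2.le]

lemma dist_A_cB (hR : 2 ≤ R) (hM : R ≤ M) {ℓ j : ℕ} (hj : j ≤ bigN R M) :
    dist (ptA R ℓ) (cB R M ℓ j) = DD R M ℓ := by
  have h1 := tau_pos R M hR hM j
  have h2 := tau_lt_al R M hR hM hj
  have h4 := al_lt_DD R M hR hM ℓ
  have h5 := DD_pos R M hR hM ℓ
  unfold ptA cB
  rw [dist_pair]
  have e1 : |base R ℓ - (base R ℓ + DD R M ℓ)| = DD R M ℓ := by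
    rw [abs_sub_comm]; simp [abs_of_pos h5]
  have e2 : |(0:ℝ) - tau R M j| = tau R M j := by
    rw [abs_sub_comm]; simp [abs_of_pos h1]
  rw [e1, e2, max_eq_left (by linarith)]

lemma dist_B_cA (hR : 2 ≤ R) (hM : R ≤ M) {ℓ j : ℕ} (hj : j ≤ bigN R M) :
    dist (ptB R M ℓ) (cA R M ℓ j) = DD R M ℓ := by
  have h1 := tau_pos R M hR hM j
  have h2 := tau_lt_al R M hR hM hj
  have h4 := al_lt_DD R M hR hM ℓ
  have h5 := DD_pos R M hR hM ℓ
  unfold ptB cA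
  rw [dist_pair]
  have e1 : |base R ℓ + DD R M ℓ + al R M - (base R ℓ + al R M)| = DD R M ℓ := by
    have : base R ℓ + DD R M ℓ + al R M - (base R ℓ + al R M) = DD R M ℓ := by ring
    rw [this, abs_of_pos h5]
  have e2 : |(0:ℝ) - tau R M j| = tau R M j := by
    rw [abs_sub_comm]; simp [abs_of_pos h1]
  rw [e1, e2, max_eq_left (by linarith)]


lemma ne_of_loc_ne (hR : 2 ≤ R) {ℓ ℓ' : ℕ} {p q : ℝ × ℝ}
    (hp : isLoc R ℓ p) (hq : isLoc R ℓ' q) (hne : ℓ ≠ ℓ') : p ≠ q := by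
  intro h
  have := dist_far R hR hp hq hne
  rw [h, dist_self] at this
  have := Rr_two R hR
  linarith

noncomputable def Fs : Finset (ℝ × ℝ) :=
  (range R).image (ptA R) ∪ (range R).image (ptB R M)

noncomputable def Cs : Finset (ℝ × ℝ) :=
  (range R).biUnion fun ℓ =>
    (range (szA R M ℓ)).image (cA R M ℓ) ∪ (range (szB R M ℓ)).image (cB R M ℓ)

lemma ptA_ne_ptB (hR : 2 ≤ R) (hM : R ≤ M) (ℓ ℓ' : ℕ) : ptA R ℓ ≠ ptB R M ℓ' := by
  by_cases h : ℓ = ℓ'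
  · subst h
    intro he
    have h1 := DD_pos R M hR hM ℓ
    have h3 := al_pos R M hR hM
    have : (ptA R ℓ).1 = (ptB R M ℓ).1 := by rw [he]
    unfold ptA ptB at this
    simp at this
    linarith
  · exact ne_of_loc_ne R hR (isLoc_ptA R ℓ) (isLoc_ptB R M hR hM ℓ') h

lemma injOn_ptA (hR : 2 ≤ R) : Set.InjOn (ptA R) (range R) := by
  intro a _ b _ h
  by_contra hne
  exact ne_of_loc_ne R hR (isLoc_ptA R a) (isLoc_ptA R b) hne h

lemma injOn_ptB (hR : 2 ≤ R) (hM : R ≤ M) : Set.InjOn (ptB R M) (range R) := by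
  intro a _ b _ h
  by_contra hne
  exact ne_of_loc_ne R hR (isLoc_ptB R M hR hM a) (isLoc_ptB R M hR hM b) hne h

lemma injOn_cA (hR : 2 ≤ R) (hM : R ≤ M) (ℓ : ℕ) :
    Set.InjOn (cA R M ℓ) (range (szA R M ℓ)) := by
  intro a _ b _ h
  have : tau R M a = tau R M b := congrArg Prod.snd h
  exact tau_inj R M hR hM this

lemma injOn_cB (hR : 2 ≤ R) (hM : R ≤ M) (ℓ : ℕ) :
    Set.InjOn (cB R M ℓ) (range (szB R M ℓ)) := by
  intro a _ b _ h
  have : tau R M a = tau R M b := congrArg Prod.snd h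
  exact tau_inj R M hR hM this

lemma cA_ne_cB (hR : 2 ≤ R) (hM : R ≤ M) (ℓ j k : ℕ) : cA R M ℓ j ≠ cB R M ℓ k := by
  intro h
  have : (cA R M ℓ j).1 = (cB R M ℓ k).1 := by rw [h]
  unfold cA cB at this
  simp at this
  exact absurd this (ne_of_lt (al_lt_DD R M hR hM ℓ))

lemma Fs_card (hR : 2 ≤ R) (hM : R ≤ M) : (Fs R M).card = 2 * R := by
  unfold Fs
  rw [Finset.card_union_of_disjoint, Finset.card_image_of_injOn (by exact_mod_cast injOn_ptA R hR),
    Finset.card_image_of_injOn (by exact_mod_cast injOn_ptB R M hR hM), Finset.card_range]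
  · ring
  · rw [Finset.disjoint_left]
    rintro p hp hq
    obtain ⟨a, _, rfl⟩ := Finset.mem_image.mp hp
    obtain ⟨b, _, hb⟩ := Finset.mem_image.mp hq
    exact ptA_ne_ptB R M hR hM a b hb.symm

lemma locClients_disjoint (hR : 2 ≤ R) (hM : R ≤ M) :
    ∀ ℓ ∈ range R, ∀ ℓ' ∈ range R, ℓ ≠ ℓ' →
      Disjoint ((range (szA R M ℓ)).image (cA R M ℓ) ∪ (range (szB R M ℓ)).image (cB R M ℓ))
        ((range (szA R M ℓ')).image (cA R M ℓ') ∪ (range (szB R M ℓ')).image (cB R M ℓ')) := by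
  intro ℓ _ ℓ' _ hne
  rw [Finset.disjoint_left]
  intro p hp hq
  have hloc1 : isLoc R ℓ p := by
    rcases Finset.mem_union.mp hp with h | h <;> obtain ⟨a, _, rfl⟩ := Finset.mem_image.mp h
    · exact isLoc_cA R M hR hM ℓ a
    · exact isLoc_cB R M hR hM ℓ a
  have hloc2 : isLoc R ℓ' p := by
    rcases Finset.mem_union.mp hq with h | h <;> obtain ⟨a, _, rfl⟩ := Finset.mem_image.mp h
    · exact isLoc_cA R M hR hM ℓ' a
    · exact isLoc_cB R M hR hM ℓ' a
  exact ne_of_loc_ne R hR hloc1 hloc2 hne rfl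

lemma Cs_card (hR : 2 ≤ R) (hM : R ≤ M) : (Cs R M).card = (M + R) * R := by
  unfold Cs
  rw [Finset.card_biUnion (locClients_disjoint R M hR hM)]
  have : ∀ ℓ ∈ range R,
      ((range (szA R M ℓ)).image (cA R M ℓ) ∪ (range (szB R M ℓ)).image (cB R M ℓ)).card
        = szA R M ℓ + szB R M ℓ := by
    intro ℓ _
    rw [Finset.card_union_of_disjoint, Finset.card_image_of_injOn (by exact_mod_cast injOn_cA R M hR hM ℓ),
      Finset.card_image_of_injOn (by exact_mod_cast injOn_cB R M hR hM ℓ), Finset.card_range,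
      Finset.card_range]
    rw [Finset.disjoint_left]
    rintro p hp hq
    obtain ⟨a, _, rfl⟩ := Finset.mem_image.mp hp
    obtain ⟨b, _, hb⟩ := Finset.mem_image.mp hq
    exact cA_ne_cB R M hR hM ℓ a b hb.symm
  rw [Finset.sum_congr rfl this, szsum R M hR hM]
  rfl

lemma fac_snd (hR : 2 ≤ R) (hM : R ≤ M) {p : ℝ × ℝ} (hp : p ∈ Fs R M) : p.2 = 0 := by
  unfold Fs at hp
  rcases Finset.mem_union.mp hp with h | h <;> obtain ⟨a, _, rfl⟩ := Finset.mem_image.mp h <;> rfl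

lemma cli_snd (hR : 2 ≤ R) (hM : R ≤ M) {p : ℝ × ℝ} (hp : p ∈ Cs R M) : 0 < p.2 := by
  unfold Cs at hp
  obtain ⟨ℓ, _, hm⟩ := Finset.mem_biUnion.mp hp
  rcases Finset.mem_union.mp hm with h | h <;> obtain ⟨a, _, rfl⟩ := Finset.mem_image.mp h <;>
    exact tau_pos R M hR hM a

lemma Fs_Cs_disjoint (hR : 2 ≤ R) (hM : R ≤ M) : Disjoint (Fs R M) (Cs R M) := by
  rw [Finset.disjoint_left]
  intro p hp hq
  have h1 := fac_snd R M hR hM hp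
  have h2 := cli_snd R M hR hM hq
  rw [h1] at h2
  exact lt_irrefl _ h2

lemma mem_Fs (hR : 2 ≤ R) (hM : R ≤ M) {p : ℝ × ℝ} (hp : p ∈ Fs R M) :
    ∃ ℓ < R, p = ptA R ℓ ∨ p = ptB R M ℓ := by
  unfold Fs at hp
  rcases Finset.mem_union.mp hp with h | h <;> obtain ⟨a, ha, rfl⟩ := Finset.mem_image.mp h
  · exact ⟨a, Finset.mem_range.mp ha, Or.inl rfl⟩
  · exact ⟨a, Finset.mem_range.mp ha, Or.inr rfl⟩

lemma mem_Cs (hR : 2 ≤ R) (hM : R ≤ M) {p : ℝ × ℝ} (hp : p ∈ Cs R M) :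
    ∃ ℓ < R, (∃ j < szA R M ℓ, p = cA R M ℓ j) ∨ (∃ j < szB R M ℓ, p = cB R M ℓ j) := by
  unfold Cs at hp
  obtain ⟨ℓ, hℓ, hm⟩ := Finset.mem_biUnion.mp hp
  refine ⟨ℓ, Finset.mem_range.mp hℓ, ?_⟩
  rcases Finset.mem_union.mp hm with h | h <;> obtain ⟨a, ha, rfl⟩ := Finset.mem_image.mp h
  · exact Or.inl ⟨a, Finset.mem_range.mp ha, rfl⟩
  · exact Or.inr ⟨a, Finset.mem_range.mp ha, rfl⟩


noncomputable def xf (p q : ℝ × ℝ) : ℝ :=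
  if dist p q ≤ al R M then Th R else if dist p q ≤ 1 then 1 / (2 * R) else 0

noncomputable def yf (_ : ℝ × ℝ) : ℝ := Th R

lemma xf_far (hR : 2 ≤ R) (hM : R ≤ M) {ℓ ℓ' : ℕ} {p q : ℝ × ℝ}
    (hp : isLoc R ℓ p) (hq : isLoc R ℓ' q) (hne : ℓ ≠ ℓ') : xf R M p q = 0 := by
  have h := dist_far R hR hp hq hne
  have h1 := al_le_one R M hR hM
  have h2 := Rr_two R hR
  unfold xf
  rw [if_neg (by linarith), if_neg (by linarith)]

lemma xf_al (hR : 2 ≤ R) (hM : R ≤ M) {p q : ℝ × ℝ}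
    (h : dist p q = al R M) : xf R M p q = Th R := by
  unfold xf
  rw [h, if_pos le_rfl]

lemma xf_DD (hR : 2 ≤ R) (hM : R ≤ M) {ℓ : ℕ} {p q : ℝ × ℝ}
    (h : dist p q = DD R M ℓ) : xf R M p q = 1 / (2 * R) := by
  have h1 := al_lt_DD R M hR hM ℓ
  have h2 := DD_le_one R M hR hM ℓ
  unfold xf
  rw [h, if_neg (by linarith), if_pos h2]

lemma sz_al_le (hR : 2 ≤ R) (hM : R ≤ M) {n : ℕ} (hn : n ≤ bigN R M) :
    (n : ℝ) * al R M ≤ 1 / (2 * R) := by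
  have hN := bigNr_pos R M hR hM
  have hr := Rr_pos R hR
  have hnr : (n:ℝ) ≤ bigN R M := by exact_mod_cast hn
  have hal := al_pos R M hR hM
  unfold al
  rw [mul_one_div, div_le_div_iff₀ (by positivity) (by positivity)]
  nlinarith

lemma ineqA (hR : 2 ≤ R) (hM : R ≤ M) (ℓ : ℕ) :
    (szA R M ℓ : ℝ) * (al R M * Th R) + (szB R M ℓ : ℝ) * (DD R M ℓ * (1 / (2 * R)))
      ≤ 1 * Th R := by
  have hr := Rr_pos R hR
  have hr2 := Rr_two R hR
  have h1 := sz_al_le R M hR hM (sz_facts R M hR hM ℓ).2.2.2.1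
  have h2 := szB_DD R M hR hM ℓ
  have hTh1 := Th_lt_one R hR
  have hTh0 := Th_pos R hR
  have e1 : (szA R M ℓ : ℝ) * (al R M * Th R) ≤ 1 / (2 * R) := by
    calc (szA R M ℓ : ℝ) * (al R M * Th R) = ((szA R M ℓ : ℝ) * al R M) * Th R := by ring
    _ ≤ (1 / (2 * R)) * 1 := by
        apply mul_le_mul h1 hTh1.le hTh0.le (by positivity)
    _ = 1 / (2 * R) := by ring
  have e2 : (szB R M ℓ : ℝ) * (DD R M ℓ * (1 / (2 * R))) = 1 / 2 := by
    calc (szB R M ℓ : ℝ) * (DD R M ℓ * (1 / (2 * R))) = ((szB R M ℓ : ℝ) * DD R M ℓ) * (1 / (2 * R)) := by ring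
    _ = (R : ℝ) * (1 / (2 * R)) := by rw [h2]
    _ = 1 / 2 := by
        field_simp
  have e3 : 1 / (2 * (R:ℝ)) + 1 / 2 ≤ Th R := by
    unfold Th
    have key : (2 * (R:ℝ) - 1) / (2 * R) - 1 / (2 * R) - 1 / 2 = (R - 2) / (2 * R) := by
      field_simp; ring
    have : 0 ≤ ((R:ℝ) - 2) / (2 * R) := div_nonneg (by linarith) (by positivity)
    linarith [key, this]
  linarith

lemma ineqB (hR : 2 ≤ R) (hM : R ≤ M) (ℓ : ℕ) :
    (szB R M ℓ : ℝ) * (al R M * Th R) + (szA R M ℓ : ℝ) * (DD R M ℓ * (1 / (2 * R)))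
      ≤ 1 * Th R := by
  have hr := Rr_pos R hR
  have hr2 := Rr_two R hR
  have h1 := sz_al_le R M hR hM (sz_facts R M hR hM ℓ).2.2.2.2
  have h2 := szB_DD R M hR hM ℓ
  have hTh1 := Th_lt_one R hR
  have hTh0 := Th_pos R hR
  have hDD1 := DD_le_one R M hR hM ℓ
  have hDD0 := DD_pos R M hR hM ℓ
  have e1 : (szB R M ℓ : ℝ) * (al R M * Th R) ≤ 1 / (2 * R) := by
    calc (szB R M ℓ : ℝ) * (al R M * Th R) = ((szB R M ℓ : ℝ) * al R M) * Th R := by ring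
    _ ≤ (1 / (2 * R)) * 1 := by
        apply mul_le_mul h1 hTh1.le hTh0.le (by positivity)
    _ = 1 / (2 * R) := by ring
  rcases sz_parity R M hR ℓ with hc | ⟨hc, hR3⟩
  · have e2 : (szA R M ℓ : ℝ) * (DD R M ℓ * (1 / (2 * R))) = 1 / 2 := by
      rw [hc]
      calc (szB R M ℓ : ℝ) * (DD R M ℓ * (1 / (2 * R))) = ((szB R M ℓ : ℝ) * DD R M ℓ) * (1 / (2 * R)) := by ring
      _ = (R : ℝ) * (1 / (2 * R)) := by rw [h2]
      _ = 1 / 2 := by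
          field_simp
    have e3 : 1 / (2 * (R:ℝ)) + 1 / 2 ≤ Th R := by
      unfold Th
      have key : (2 * (R:ℝ) - 1) / (2 * R) - 1 / (2 * R) - 1 / 2 = (R - 2) / (2 * R) := by
        field_simp; ring
      have : 0 ≤ ((R:ℝ) - 2) / (2 * R) := div_nonneg (by linarith) (by positivity)
      linarith [key, this]
    linarith
  · have hr3 : (3:ℝ) ≤ R := by exact_mod_cast hR3
    have hcr : (szA R M ℓ : ℝ) = (szB R M ℓ : ℝ) + 1 := by exact_mod_cast hc
    have e2 : (szA R M ℓ : ℝ) * (DD R M ℓ * (1 / (2 * R))) ≤ ((R:ℝ) + 1) * (1 / (2 * R)) := by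
      have hAD : (szA R M ℓ : ℝ) * DD R M ℓ ≤ (R:ℝ) + 1 := by
        rw [hcr, add_mul, h2, one_mul]
        linarith
      calc (szA R M ℓ : ℝ) * (DD R M ℓ * (1 / (2 * R))) = ((szA R M ℓ : ℝ) * DD R M ℓ) * (1 / (2 * R)) := by ring
      _ ≤ ((R:ℝ) + 1) * (1 / (2 * R)) := by
          apply mul_le_mul_of_nonneg_right hAD (by positivity)
    have e3 : 1 / (2 * (R:ℝ)) + ((R:ℝ) + 1) * (1 / (2 * R)) ≤ Th R := by
      unfold Th
      have key : (2 * (R:ℝ) - 1) / (2 * R) - 1 / (2 * R) - ((R:ℝ) + 1) * (1 / (2 * R))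
          = (R - 3) / (2 * R) := by
        field_simp; ring
      have : 0 ≤ ((R:ℝ) - 3) / (2 * R) := div_nonneg (by linarith) (by positivity)
      linarith [key, this]
    linarith


lemma FsAB_disj (hR : 2 ≤ R) (hM : R ≤ M) :
    Disjoint ((range R).image (ptA R)) ((range R).image (ptB R M)) := by
  rw [Finset.disjoint_left]
  rintro p hp hq
  obtain ⟨a, _, rfl⟩ := Finset.mem_image.mp hp
  obtain ⟨b, _, hb⟩ := Finset.mem_image.mp hq
  exact ptA_ne_ptB R M hR hM a b hb.symm

lemma locC_disj (hR : 2 ≤ R) (hM : R ≤ M) (ℓ : ℕ) :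
    Disjoint ((range (szA R M ℓ)).image (cA R M ℓ))
      ((range (szB R M ℓ)).image (cB R M ℓ)) := by
  rw [Finset.disjoint_left]
  rintro p hp hq
  obtain ⟨a, _, rfl⟩ := Finset.mem_image.mp hp
  obtain ⟨b, _, hb⟩ := Finset.mem_image.mp hq
  exact cA_ne_cB R M hR hM ℓ a b hb.symm

lemma pairwise_locC (hR : 2 ≤ R) (hM : R ≤ M) :
    Set.PairwiseDisjoint ↑(range R) (fun ℓ =>
      (range (szA R M ℓ)).image (cA R M ℓ) ∪ (range (szB R M ℓ)).image (cB R M ℓ)) :=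
  fun a ha b hb hab =>
    locClients_disjoint R M hR hM a (Finset.mem_coe.mp ha) b (Finset.mem_coe.mp hb) hab

lemma load_sum (hR : 2 ≤ R) (hM : R ≤ M) {ℓ : ℕ} (hℓ : ℓ < R) {i : ℝ × ℝ}
    (hi : isLoc R ℓ i) (vA vB : ℝ)
    (hA : ∀ j < szA R M ℓ, dist i (cA R M ℓ j) * xf R M i (cA R M ℓ j) = vA)
    (hB : ∀ j < szB R M ℓ, dist i (cB R M ℓ j) * xf R M i (cB R M ℓ j) = vB) :
    ∑ q ∈ Cs R M, dist i q * xf R M i q = (szA R M ℓ : ℝ) * vA + (szB R M ℓ : ℝ) * vB := by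
  unfold Cs
  rw [Finset.sum_biUnion (pairwise_locC R M hR hM)]
  rw [Finset.sum_eq_single_of_mem ℓ (Finset.mem_range.mpr hℓ)]
  · rw [Finset.sum_union (locC_disj R M hR hM ℓ)]
    rw [Finset.sum_image (fun a _ b _ h => tau_inj R M hR hM (congrArg Prod.snd h)),
      Finset.sum_image (fun a _ b _ h => tau_inj R M hR hM (congrArg Prod.snd h))]
    rw [Finset.sum_congr rfl (fun j hj => hA j (Finset.mem_range.mp hj)),
      Finset.sum_congr rfl (fun j hj => hB j (Finset.mem_range.mp hj)),
      Finset.sum_const, Finset.sum_const, Finset.card_range, Finset.card_range,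
      nsmul_eq_mul, nsmul_eq_mul]
  · intro ℓ' _ hne
    apply Finset.sum_eq_zero
    intro q hq
    have hloc : isLoc R ℓ' q := by
      rcases Finset.mem_union.mp hq with h | h <;> obtain ⟨a, _, rfl⟩ := Finset.mem_image.mp h
      · exact isLoc_cA R M hR hM ℓ' a
      · exact isLoc_cB R M hR hM ℓ' a
    rw [xf_far R M hR hM hi hloc (fun h => hne h.symm), mul_zero]

lemma Th_add (hR : 2 ≤ R) : Th R + 1 / (2 * (R:ℝ)) = 1 := by
  have hr := Rr_pos R hR
  unfold Th
  field_simp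
  ring

lemma lp_feasible (hR : 2 ≤ R) (hM : R ≤ M) :
    SCLPFeasible (Fs R M) (Cs R M) 1 (2 * R - 1) (xf R M) (yf R) := by
  have hr := Rr_pos R hR
  have hr2 := Rr_two R hR
  have hTh0 := Th_pos R hR
  have hTh1 := Th_lt_one R hR
  have hhalf0 : (0:ℝ) < 1 / (2 * (R:ℝ)) := by positivity
  have hhalf1 : 1 / (2 * (R:ℝ)) ≤ Th R := by
    unfold Th
    rw [div_le_div_iff₀ (by positivity) (by positivity)]
    nlinarith
  refine ⟨?_, ?_, ?_, ?_, ?_, ?_, ?_⟩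
  · intro i _ j _
    unfold xf
    split_ifs
    · exact ⟨hTh0.le, hTh1.le⟩
    · exact ⟨hhalf0.le, by linarith⟩
    · exact ⟨le_rfl, by norm_num⟩
  · intro i _
    exact ⟨hTh0.le, hTh1.le⟩
  · intro i hi
    obtain ⟨ℓ, hℓ, hcase | hcase⟩ := mem_Fs R M hR hM hi
    · subst hcase
      rw [load_sum R M hR hM hℓ (isLoc_ptA R ℓ) (al R M * Th R) (DD R M ℓ * (1 / (2 * R)))
        (fun j hj => ?_) (fun j hj => ?_)]
      · exact ineqA R M hR hM ℓ
      · have hjN : j ≤ bigN R M := by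
          have := (sz_facts R M hR hM ℓ).2.2.2.1; omega
        rw [dist_A_cA R M hR hM hjN, xf_al R M hR hM (dist_A_cA R M hR hM hjN)]
      · have hjN : j ≤ bigN R M := by
          have := (sz_facts R M hR hM ℓ).2.2.2.2; omega
        rw [dist_A_cB R M hR hM hjN, xf_DD R M hR hM (dist_A_cB R M hR hM hjN)]
    · subst hcase
      rw [load_sum R M hR hM hℓ (isLoc_ptB R M hR hM ℓ) (DD R M ℓ * (1 / (2 * R))) (al R M * Th R)
        (fun j hj => ?_) (fun j hj => ?_)]
      · have := ineqB R M hR hM ℓ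
        unfold yf
        linarith
      · have hjN : j ≤ bigN R M := by
          have := (sz_facts R M hR hM ℓ).2.2.2.1; omega
        rw [dist_B_cA R M hR hM hjN, xf_DD R M hR hM (dist_B_cA R M hR hM hjN)]
      · have hjN : j ≤ bigN R M := by
          have := (sz_facts R M hR hM ℓ).2.2.2.2; omega
        rw [dist_B_cB R M hR hM hjN, xf_al R M hR hM (dist_B_cB R M hR hM hjN)]
  · unfold yf
    rw [Finset.sum_const, Fs_card R M hR hM, nsmul_eq_mul]
    have hcast : ((2 * R - 1 : ℕ) : ℝ) = 2 * (R:ℝ) - 1 := by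
      have : (1:ℕ) ≤ 2 * R := by omega
      push_cast [Nat.cast_sub this]
      ring
    rw [hcast]
    push_cast
    unfold Th
    rw [mul_div_cancel₀ _ (by positivity : (2 * (R:ℝ)) ≠ 0)]
  · intro j hj
    obtain ⟨ℓ, hℓ, hcase⟩ := mem_Cs R M hR hM hj
    have hjloc : isLoc R ℓ j := by
      rcases hcase with ⟨k, hk, rfl⟩ | ⟨k, hk, rfl⟩
      · exact isLoc_cA R M hR hM ℓ k
      · exact isLoc_cB R M hR hM ℓ k
    have hkN : ∀ {k sz : ℕ}, k < sz → sz ≤ bigN R M → k ≤ bigN R M := by omega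
    unfold Fs
    rw [Finset.sum_union (FsAB_disj R M hR hM),
      Finset.sum_image (fun a ha b hb h =>
        injOn_ptA R hR (Finset.mem_coe.mpr ha) (Finset.mem_coe.mpr hb) h),
      Finset.sum_image (fun a ha b hb h =>
        injOn_ptB R M hR hM (Finset.mem_coe.mpr ha) (Finset.mem_coe.mpr hb) h)]
    rw [Finset.sum_eq_single_of_mem ℓ (Finset.mem_range.mpr hℓ)
      (fun ℓ' _ hne => xf_far R M hR hM (isLoc_ptA R ℓ') hjloc hne)]
    rw [Finset.sum_eq_single_of_mem ℓ (Finset.mem_range.mpr hℓ)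
      (fun ℓ' _ hne => xf_far R M hR hM (isLoc_ptB R M hR hM ℓ') hjloc hne)]
    rcases hcase with ⟨k, hk, rfl⟩ | ⟨k, hk, rfl⟩
    · have hkN' : k ≤ bigN R M := hkN hk (sz_facts R M hR hM ℓ).2.2.2.1
      rw [xf_al R M hR hM (dist_A_cA R M hR hM hkN'),
        xf_DD R M hR hM (dist_B_cA R M hR hM hkN')]
      exact Th_add R hR
    · have hkN' : k ≤ bigN R M := hkN hk (sz_facts R M hR hM ℓ).2.2.2.2
      rw [xf_DD R M hR hM (dist_A_cB R M hR hM hkN'),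
        xf_al R M hR hM (dist_B_cB R M hR hM hkN')]
      rw [add_comm]
      exact Th_add R hR
  · intro i _ j _
    unfold xf yf
    split_ifs
    · exact le_rfl
    · exact hhalf1
    · exact hTh0.le
  · intro i _ j _ hd
    unfold xf
    have h1 := al_le_one R M hR hM
    rw [if_neg (by linarith), if_neg (by linarith)]


noncomputable def locOf (q : ℝ × ℝ) : ℕ := ⌊q.1 / (2 * R + 4)⌋₊

lemma locOf_eq (hR : 2 ≤ R) {ℓ : ℕ} {q : ℝ × ℝ} (h : isLoc R ℓ q) : locOf R q = ℓ := by
  have hr2 := Rr_two R hR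
  have hpos : (0:ℝ) < 2 * R + 4 := by linarith
  obtain ⟨h1, h2⟩ := h
  unfold base at h1 h2
  unfold locOf
  have hq0 : 0 ≤ q.1 := le_trans (by positivity) h1
  rw [Nat.floor_eq_iff (div_nonneg hq0 hpos.le)]
  constructor
  · rw [le_div_iff₀ hpos]
    linarith
  · rw [div_lt_iff₀ hpos]
    push_cast
    nlinarith

lemma load_ge (S : StarCover (Fs R M) (Cs R M)) {p : (ℝ × ℝ) × Finset (ℝ × ℝ)}
    (hp : p ∈ S.stars) {t : ℝ} (ht : t ≤ ∑ c ∈ p.2, dist p.1 c) : t ≤ S.load := by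
  have h1 : (∑ c ∈ p.2, nndist p.1 c) ≤ S.stars.sup fun p => ∑ c ∈ p.2, nndist p.1 c :=
    Finset.le_sup (f := fun p => ∑ c ∈ p.2, nndist p.1 c) hp
  have h2 : ((∑ c ∈ p.2, nndist p.1 c : ℝ≥0) : ℝ) = ∑ c ∈ p.2, dist p.1 c := by
    push_cast
    rfl
  have h3 := NNReal.coe_le_coe.mpr h1
  unfold StarCover.load
  rw [h2] at h3
  linarith

lemma mem_cA_Cs (hR : 2 ≤ R) (hM : R ≤ M) {ℓ j : ℕ} (hℓ : ℓ < R) (hj : j < szA R M ℓ) :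
    cA R M ℓ j ∈ Cs R M := by
  unfold Cs
  rw [Finset.mem_biUnion]
  exact ⟨ℓ, Finset.mem_range.mpr hℓ, Finset.mem_union_left _
    (Finset.mem_image.mpr ⟨j, Finset.mem_range.mpr hj, rfl⟩)⟩

lemma mem_cB_Cs (hR : 2 ≤ R) (hM : R ≤ M) {ℓ j : ℕ} (hℓ : ℓ < R) (hj : j < szB R M ℓ) :
    cB R M ℓ j ∈ Cs R M := by
  unfold Cs
  rw [Finset.mem_biUnion]
  exact ⟨ℓ, Finset.mem_range.mpr hℓ, Finset.mem_union_right _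
    (Finset.mem_image.mpr ⟨j, Finset.mem_range.mpr hj, rfl⟩)⟩

lemma sum_dist_image (hR : 2 ≤ R) (hM : R ≤ M) {i : ℝ × ℝ} {n : ℕ} {f : ℕ → ℝ × ℝ}
    (hinj : ∀ a ∈ range n, ∀ b ∈ range n, f a = f b → a = b)
    {v : ℝ} (hv : ∀ j < n, dist i (f j) = v) :
    ∑ c ∈ (range n).image f, dist i c = n * v := by
  rw [Finset.sum_image hinj]
  rw [Finset.sum_congr rfl (fun j hj => hv j (Finset.mem_range.mp hj)),
    Finset.sum_const, Finset.card_range, nsmul_eq_mul]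

lemma integral_bound (hR : 2 ≤ R) (hM : R ≤ M) (S : StarCover (Fs R M) (Cs R M))
    (hsz : S.size ≤ 2 * R - 1) : (R : ℝ) ≤ S.load := by
  have hr2 := Rr_two R hR
  -- facility locations
  have hfac : ∀ p ∈ S.stars, ∃ ℓ < R, (p.1 = ptA R ℓ ∨ p.1 = ptB R M ℓ) ∧ locOf R p.1 = ℓ := by
    intro p hp
    obtain ⟨ℓ, hℓ, hcase⟩ := mem_Fs R M hR hM (S.fac_mem p hp)
    refine ⟨ℓ, hℓ, hcase, ?_⟩
    rcases hcase with h | h <;> rw [h]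
    · exact locOf_eq R hR (isLoc_ptA R ℓ)
    · exact locOf_eq R hR (isLoc_ptB R M hR hM ℓ)
  -- pigeonhole
  have hpig : ∃ ℓ₀ < R, (S.stars.filter (fun p => locOf R p.1 = ℓ₀)).card ≤ 1 := by
    by_contra hcon
    push_neg at hcon
    have hsum : S.stars.card
        = ∑ ℓ ∈ range R, (S.stars.filter (fun p => locOf R p.1 = ℓ)).card := by
      apply Finset.card_eq_sum_card_fiberwise
      intro p hp
      obtain ⟨ℓ, hℓ, _, hloc⟩ := hfac p hp
      simp only [hloc]
      exact Finset.mem_range.mpr hℓ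
    have h2R : 2 * R ≤ S.stars.card := by
      rw [hsum]
      calc 2 * R = ∑ _ℓ ∈ range R, 2 := by rw [Finset.sum_const, Finset.card_range]; ring
      _ ≤ _ := Finset.sum_le_sum (fun ℓ hℓ => hcon ℓ (Finset.mem_range.mp hℓ))
    unfold StarCover.size at hsz
    omega
  obtain ⟨ℓ₀, hℓ₀, hfib⟩ := hpig
  by_cases hA : ∃ q ∈ S.stars, ∃ c ∈ q.2, isLoc R ℓ₀ c ∧ locOf R q.1 ≠ ℓ₀
  · -- some loc-ℓ₀ client served from afar
    obtain ⟨q, hq, c, hc, hcl, hne⟩ := hA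
    obtain ⟨ℓ', _, hcase, hloc'⟩ := hfac q hq
    have hℓ'ne : ℓ' ≠ ℓ₀ := by rw [← hloc']; exact hne
    have hq1loc : isLoc R ℓ' q.1 := by
      rcases hcase with h | h <;> rw [h]
      · exact isLoc_ptA R ℓ'
      · exact isLoc_ptB R M hR hM ℓ'
    have hdist : 2 * (R:ℝ) + 2 ≤ dist q.1 c := dist_far R hR hq1loc hcl hℓ'ne
    apply load_ge R M S hq
    calc (R:ℝ) ≤ dist q.1 c := by linarith
    _ ≤ ∑ c' ∈ q.2, dist q.1 c' :=
        Finset.single_le_sum (f := fun c' => dist q.1 c') (fun c' _ => dist_nonneg) hc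
  · push_neg at hA
    -- all loc-ℓ₀ clients are covered by local stars
    have hb0 : 0 < szB R M ℓ₀ := by
      have := (sz_facts R M hR hM ℓ₀).1; omega
    obtain ⟨p, hp, hpc⟩ := S.covers _ (mem_cB_Cs R M hR hM hℓ₀ hb0)
    have hploc : locOf R p.1 = ℓ₀ := hA p hp _ hpc (isLoc_cB R M hR hM ℓ₀ 0)
    have hpfib : p ∈ S.stars.filter (fun p => locOf R p.1 = ℓ₀) :=
      Finset.mem_filter.mpr ⟨hp, hploc⟩
    have hall : ∀ c ∈ Cs R M, isLoc R ℓ₀ c → c ∈ p.2 := by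
      intro c hcC hcl
      obtain ⟨q, hq, hqc⟩ := S.covers c hcC
      have hqloc : locOf R q.1 = ℓ₀ := hA q hq c hqc hcl
      have hqfib : q ∈ S.stars.filter (fun p => locOf R p.1 = ℓ₀) :=
        Finset.mem_filter.mpr ⟨hq, hqloc⟩
      have : q = p := Finset.card_le_one.mp hfib q hqfib p hpfib
      rw [← this]
      exact hqc
    obtain ⟨ℓ, hℓ, hcase, hloc⟩ := hfac p hp
    have hℓeq : ℓ = ℓ₀ := by rw [← hloc, hploc]
    subst hℓeq
    have hDD := szB_DD R M hR hM ℓ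
    have hDD0 := DD_pos R M hR hM ℓ
    have hszBN := (sz_facts R M hR hM ℓ).2.2.2.2
    have hszAN := (sz_facts R M hR hM ℓ).2.2.2.1
    have hAB := (sz_facts R M hR hM ℓ).2.1
    apply load_ge R M S hp
    rcases hcase with h | h
    · -- p.1 = ptA ℓ : the cB clients are all in p.2, each at distance DD
      have hsub : (range (szB R M ℓ)).image (cB R M ℓ) ⊆ p.2 := by
        intro c hc
        obtain ⟨j, hj, rfl⟩ := Finset.mem_image.mp hc
        exact hall _ (mem_cB_Cs R M hR hM hℓ (Finset.mem_range.mp hj))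
          (isLoc_cB R M hR hM ℓ j)
      have hsum : ∑ c ∈ (range (szB R M ℓ)).image (cB R M ℓ), dist p.1 c
          = (szB R M ℓ : ℝ) * DD R M ℓ := by
        apply sum_dist_image R M hR hM (fun a _ b _ hab => tau_inj R M hR hM (congrArg Prod.snd hab))
        intro j hj
        rw [h]
        exact dist_A_cB R M hR hM (by omega)
      calc (R:ℝ) = (szB R M ℓ : ℝ) * DD R M ℓ := hDD.symm
      _ = ∑ c ∈ (range (szB R M ℓ)).image (cB R M ℓ), dist p.1 c := hsum.symm
      _ ≤ ∑ c ∈ p.2, dist p.1 c :=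
          Finset.sum_le_sum_of_subset_of_nonneg hsub (fun c _ _ => dist_nonneg)
    · -- p.1 = ptB ℓ : the cA clients are all in p.2, each at distance DD
      have hsub : (range (szA R M ℓ)).image (cA R M ℓ) ⊆ p.2 := by
        intro c hc
        obtain ⟨j, hj, rfl⟩ := Finset.mem_image.mp hc
        exact hall _ (mem_cA_Cs R M hR hM hℓ (Finset.mem_range.mp hj))
          (isLoc_cA R M hR hM ℓ j)
      have hsum : ∑ c ∈ (range (szA R M ℓ)).image (cA R M ℓ), dist p.1 c
          = (szA R M ℓ : ℝ) * DD R M ℓ := by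
        apply sum_dist_image R M hR hM (fun a _ b _ hab => tau_inj R M hR hM (congrArg Prod.snd hab))
        intro j hj
        rw [h]
        exact dist_B_cA R M hR hM (by omega)
      have hba : (szB R M ℓ : ℝ) ≤ (szA R M ℓ : ℝ) := by exact_mod_cast hAB
      calc (R:ℝ) = (szB R M ℓ : ℝ) * DD R M ℓ := hDD.symm
      _ ≤ (szA R M ℓ : ℝ) * DD R M ℓ := by nlinarith
      _ = ∑ c ∈ (range (szA R M ℓ)).image (cA R M ℓ), dist p.1 c := hsum.symm
      _ ≤ ∑ c ∈ p.2, dist p.1 c :=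
          Finset.sum_le_sum_of_subset_of_nonneg hsub (fun c _ _ => dist_nonneg)

end MLKSC

/-- The hard instance for the MLkSC LP (Appendix B of the paper): for all
`R ≥ 2`, `M ≥ R` there is an instance with `|F| = 2R`, `|C| = (M+R)R` whose LP
`SC-LP(1, 2R−1)` is feasible, yet every star cover of size at most `2R−1` has
load at least `R`; consequently, with `ε = 1/(2R)`, every star cover of size at
most `(1+ε)(2R−1)` has load at least `1/(2ε)` times the optimal fractional load. -/
theorem mlksc_lp_gap (R M : ℕ) (hR : 2 ≤ R) (hM : R ≤ M) :
    ∃ (X : Type) (m : MetricSpace X) (F C : Finset X),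
      Disjoint F C ∧ F.card = 2 * R ∧ C.card = (M + R) * R ∧
      (∃ (x : X → X → ℝ) (y : X → ℝ),
        @SCLPFeasible X m F C 1 (2 * R - 1) x y) ∧
      (∀ S : @StarCover X m F C, S.size ≤ 2 * R - 1 → (R : ℝ) ≤ S.load) ∧
      (∀ S : @StarCover X m F C,
        (S.size : ℝ) ≤ (1 + 1 / (2 * (R : ℝ))) * ((2 * R - 1 : ℕ) : ℝ) →
          (1 / (2 * (1 / (2 * (R : ℝ))))) *
            sInf {T : ℝ | ∃ (x : X → X → ℝ) (y : X → ℝ),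
              @SCLPFeasible X m F C T (2 * R - 1) x y} ≤ S.load) := by
  have hr := MLKSC.Rr_pos R hR
  have hr2 := MLKSC.Rr_two R hR
  refine ⟨ℝ × ℝ, inferInstance, MLKSC.Fs R M, MLKSC.Cs R M,
    MLKSC.Fs_Cs_disjoint R M hR hM, MLKSC.Fs_card R M hR hM, MLKSC.Cs_card R M hR hM,
    ⟨MLKSC.xf R M, MLKSC.yf R, MLKSC.lp_feasible R M hR hM⟩,
    fun S hS => MLKSC.integral_bound R M hR hM S hS, ?_⟩
  intro S hS
  have hcast : ((2 * R - 1 : ℕ) : ℝ) = 2 * (R:ℝ) - 1 := by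
    have h1 : (1:ℕ) ≤ 2 * R := by omega
    push_cast [Nat.cast_sub h1]
    ring
  have hlt : (S.size : ℝ) < 2 * (R:ℝ) := by
    rw [hcast] at hS
    have hfrac : (2 * (R:ℝ) - 1) / (2 * (R:ℝ)) < 1 := by
      rw [div_lt_one (by positivity)]
      linarith
    have hexp : (1 + 1 / (2 * (R:ℝ))) * (2 * (R:ℝ) - 1)
        = (2 * (R:ℝ) - 1) + (2 * (R:ℝ) - 1) / (2 * (R:ℝ)) := by
      field_simp
    calc (S.size : ℝ) ≤ (1 + 1 / (2 * (R:ℝ))) * (2 * (R:ℝ) - 1) := hS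
    _ = (2 * (R:ℝ) - 1) + (2 * (R:ℝ) - 1) / (2 * (R:ℝ)) := hexp
    _ < 2 * (R:ℝ) := by linarith
  have hsz : S.size ≤ 2 * R - 1 := by
    have h2 : (S.size : ℝ) < ((2 * R : ℕ) : ℝ) := by push_cast; linarith
    have h3 : S.size < 2 * R := by exact_mod_cast h2
    omega
  have hload := MLKSC.integral_bound R M hR hM S hsz
  have hmem : (1:ℝ) ∈ {T : ℝ | ∃ (x : ℝ × ℝ → ℝ × ℝ → ℝ) (y : ℝ × ℝ → ℝ),
      SCLPFeasible (MLKSC.Fs R M) (MLKSC.Cs R M) T (2 * R - 1) x y} :=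
    ⟨MLKSC.xf R M, MLKSC.yf R, MLKSC.lp_feasible R M hR hM⟩
  have hbdd : BddBelow {T : ℝ | ∃ (x : ℝ × ℝ → ℝ × ℝ → ℝ) (y : ℝ × ℝ → ℝ),
      SCLPFeasible (MLKSC.Fs R M) (MLKSC.Cs R M) T (2 * R - 1) x y} := by
    refine ⟨0, fun t ht => ?_⟩
    by_contra hneg
    push_neg at hneg
    obtain ⟨x, y, feas⟩ := ht
    have hCsne : (MLKSC.Cs R M).Nonempty := by
      rw [← Finset.card_pos, MLKSC.Cs_card R M hR hM]
      have : 0 < M + R := by omega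
      exact Nat.mul_pos this (by omega)
    obtain ⟨j, hj⟩ := hCsne
    have hsum := feas.2.2.2.2.1 j hj
    have hzero : ∀ i ∈ MLKSC.Fs R M, x i j = 0 := fun i hi =>
      feas.2.2.2.2.2.2 i hi j hj (lt_of_lt_of_le hneg dist_nonneg)
    rw [Finset.sum_eq_zero hzero] at hsum
    exact absurd hsum (by norm_num)
  have hinf : sInf {T : ℝ | ∃ (x : ℝ × ℝ → ℝ × ℝ → ℝ) (y : ℝ × ℝ → ℝ),
      SCLPFeasible (MLKSC.Fs R M) (MLKSC.Cs R M) T (2 * R - 1) x y} ≤ 1 :=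
    csInf_le hbdd hmem
  have hcoef : (1 / (2 * (1 / (2 * (R:ℝ))))) = (R:ℝ) := by
    field_simp
  rw [hcoef]
  calc (R:ℝ) * sInf {T : ℝ | ∃ (x : ℝ × ℝ → ℝ × ℝ → ℝ) (y : ℝ × ℝ → ℝ),
      SCLPFeasible (MLKSC.Fs R M) (MLKSC.Cs R M) T (2 * R - 1) x y}
      ≤ (R:ℝ) * 1 := mul_le_mul_of_nonneg_left hinf (by positivity)
  _ = (R:ℝ) := mul_one _
  _ ≤ S.load := hload
end

section
/- For every integer N ≥ 2 and every real T > 0 there exist disjoint finite sets F and C with |F| = N and |C| = N + 1, and a metric d on F ∪ C, such that: (a) SC-LP(T, N) has a feasible fractional solution (in fact one with y_i = 1 for all i ∈ F and every facility load exactly T); and (b) every star cover of (F, C) — in particular even one using all N facilities — has load at least (2 − 1/N)·T. -/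
open scoped NNReal

/-- The fractional load of facility `i` under assignment `x`. -/
noncomputable def facLoad {X : Type*} [MetricSpace X] (C : Finset X)
    (x : X → X → ℝ) (i : X) : ℝ :=
  ∑ j ∈ C, dist i j * x i j

/- ### Auxiliary construction -/

abbrev Xt (N : ℕ) := Fin N ⊕ Fin (N+1)

def prB (N : ℕ) : Xt N → Xt N → Bool
  | .inl i, .inr j => (j:ℕ) == (i:ℕ)+1
  | .inr j, .inl i => (j:ℕ) == (i:ℕ)+1
  | _, _ => false

lemma prB_comm (N : ℕ) (p q : Xt N) : prB N p q = prB N q p := by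
  rcases p with i|i <;> rcases q with j|j <;> rfl

noncomputable def dd (N : ℕ) (T : ℝ) (p q : Xt N) : ℝ :=
  if p = q then 0 else if prB N p q then (1 - 1/N)*T else T

section facts
variable {N : ℕ} {T : ℝ}

lemma hNr (hN : 2 ≤ N) : (2:ℝ) ≤ (N:ℝ) := by exact_mod_cast hN

lemma ha0 (hN : 2 ≤ N) (hT : 0 < T) : 0 < (1 - 1/(N:ℝ))*T := by
  have h2 := hNr (N := N) hN
  have : 1/(N:ℝ) ≤ 1/2 := by apply one_div_le_one_div_of_le <;> linarith
  nlinarith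

lemma haT (hN : 2 ≤ N) (hT : 0 < T) : (1 - 1/(N:ℝ))*T ≤ T := by
  have h2 := hNr (N := N) hN
  have : 0 < 1/(N:ℝ) := by apply one_div_pos.2; linarith
  nlinarith

lemma hT2 (hN : 2 ≤ N) (hT : 0 < T) : T ≤ 2*((1 - 1/(N:ℝ))*T) := by
  have h2 := hNr (N := N) hN
  have : 1/(N:ℝ) ≤ 1/2 := by apply one_div_le_one_div_of_le <;> linarith
  nlinarith

lemma dd_nonneg (hN : 2 ≤ N) (hT : 0 < T) (p q : Xt N) : 0 ≤ dd N T p q := by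
  have h1 := ha0 (N := N) hN hT
  unfold dd; split
  · exact le_refl 0
  · split <;> linarith

lemma dd_le (hN : 2 ≤ N) (hT : 0 < T) (p q : Xt N) : dd N T p q ≤ T := by
  have h1 := haT (N := N) hN hT
  unfold dd; split
  · linarith
  · split <;> linarith

lemma dd_ge (hN : 2 ≤ N) (hT : 0 < T) {p q : Xt N} (h : p ≠ q) :
    (1 - 1/(N:ℝ))*T ≤ dd N T p q := by
  have h1 := haT (N := N) hN hT
  simp only [dd, if_neg h]
  split <;> linarith

lemma dd_pos (hN : 2 ≤ N) (hT : 0 < T) {p q : Xt N} (h : p ≠ q) :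
    0 < dd N T p q :=
  lt_of_lt_of_le (ha0 hN hT) (dd_ge hN hT h)

lemma dd_eval (i : Fin N) (j : Fin (N+1)) :
    dd N T (Sum.inl i) (Sum.inr j) =
      if (j:ℕ) = (i:ℕ)+1 then (1 - 1/(N:ℝ))*T else T := by
  simp only [dd, prB, reduceCtorEq, if_false, beq_iff_eq]

end facts

noncomputable def msp (N : ℕ) (T : ℝ) (hN : 2 ≤ N) (hT : 0 < T) : MetricSpace (Xt N) where
  dist := dd N T
  dist_self p := by simp [dd]
  dist_comm p q := by
    by_cases h : p = q
    · subst h; rfl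
    · simp only [dd, if_neg h, if_neg (fun e : q = p => h e.symm), prB_comm N p q]
  dist_triangle p q r := by
    by_cases hpr : p = r
    · subst hpr
      simp only [dd, if_pos rfl]
      exact add_nonneg (dd_nonneg hN hT _ _) (dd_nonneg hN hT _ _)
    by_cases hpq : p = q
    · subst hpq; simp only [dd, if_pos rfl]
      exact le_add_of_nonneg_left (by simp [dd])
    by_cases hqr : q = r
    · subst hqr; exact le_add_of_nonneg_right (by simp [dd])
    calc dd N T p r ≤ T := dd_le hN hT _ _
      _ ≤ (1 - 1/(N:ℝ))*T + (1 - 1/(N:ℝ))*T := by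
          have := hT2 (N := N) hN hT; linarith
      _ ≤ dd N T p q + dd N T q r := add_le_add (dd_ge hN hT hpq) (dd_ge hN hT hqr)
  eq_of_dist_eq_zero := by
    intro p q h
    by_contra hpq
    exact absurd h (ne_of_gt (dd_pos hN hT hpq))

noncomputable def xx (N : ℕ) : Xt N → Xt N → ℝ
  | .inl i, .inr j => if (j:ℕ) = (i:ℕ)+1 then 1 else if j = 0 then 1/N else 0
  | _, _ => 0

/-- The hard instance for the MSSC LP (Appendix B of the paper): for every
`N ≥ 2` and `T > 0` there is an instance with `|F| = N`, `|C| = N + 1` whose LP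
`SC-LP(T, N)` has a feasible fractional solution opening every facility fully
with every facility load exactly `T`, yet every star cover — even one using all
`N` facilities — has load at least `(2 − 1/N)·T`. -/
theorem mssc_lp_gap (N : ℕ) (hN : 2 ≤ N) (T : ℝ) (hT : 0 < T) :
    ∃ (X : Type) (m : MetricSpace X) (F C : Finset X),
      Disjoint F C ∧ F.card = N ∧ C.card = N + 1 ∧
      (∃ (x : X → X → ℝ) (y : X → ℝ),
        @SCLPFeasible X m F C T N x y ∧
        (∀ i ∈ F, y i = 1) ∧
        (∀ i ∈ F, @facLoad X m C x i = T)) ∧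
      (∀ S : @StarCover X m F C, (2 - 1 / (N : ℝ)) * T ≤ S.load) := by
  classical
  letI m : MetricSpace (Xt N) := msp N T hN hT
  set F : Finset (Xt N) := Finset.univ.map ⟨Sum.inl, Sum.inl_injective⟩ with hF
  set C : Finset (Xt N) := Finset.univ.map ⟨Sum.inr, Sum.inr_injective⟩ with hC
  have hNne : (N:ℝ) ≠ 0 := by
    have := hNr (N := N) hN; linarith
  have hdist : ∀ p q : Xt N, dist p q = dd N T p q := fun _ _ => rfl
  -- the facility load computation, used twice
  have hload : ∀ i : Fin N,
      ∑ j ∈ C, dist (Sum.inl i : Xt N) j * xx N (Sum.inl i) j = T := by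
    intro i
    rw [hC, Finset.sum_map]
    simp only [Function.Embedding.coeFn_mk]
    have hpt : ∀ j : Fin (N+1),
        dist (Sum.inl i : Xt N) (Sum.inr j) * xx N (Sum.inl i) (Sum.inr j) =
          (if j = (⟨(i:ℕ)+1, by omega⟩ : Fin (N+1)) then (1 - 1/(N:ℝ))*T else 0) +
          (if j = (0 : Fin (N+1)) then T * (1/(N:ℝ)) else 0) := by
      intro j
      rw [hdist, dd_eval]
      show (if (j:ℕ) = (i:ℕ)+1 then (1 - 1/(N:ℝ))*T else T) *
          (if (j:ℕ) = (i:ℕ)+1 then 1 else if j = 0 then 1/(N:ℝ) else 0) = _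
      have h1 : (j = (⟨(i:ℕ)+1, by omega⟩ : Fin (N+1))) ↔ ((j:ℕ) = (i:ℕ)+1) := by
        rw [Fin.ext_iff]
      by_cases h : (j:ℕ) = (i:ℕ)+1
      · have hj0 : j ≠ 0 := by
          intro e; rw [e] at h; simp at h
        rw [if_pos h, if_pos h, if_pos (h1.2 h), if_neg hj0]
        ring
      · rw [if_neg h, if_neg h, if_neg (fun e => h (h1.1 e))]
        by_cases h0 : j = 0
        · rw [if_pos h0, if_pos h0]; ring
        · rw [if_neg h0, if_neg h0]; ring
    rw [Finset.sum_congr rfl (fun j _ => hpt j), Finset.sum_add_distrib,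
      Finset.sum_ite_eq' Finset.univ _ (fun _ => (1 - 1/(N:ℝ))*T),
      Finset.sum_ite_eq' Finset.univ _ (fun _ => T * (1/(N:ℝ)))]
    simp only [Finset.mem_univ, if_pos]
    field_simp
    ring
  refine ⟨Xt N, m, F, C, ?_, ?_, ?_, ?_, ?_⟩
  · -- disjoint
    rw [Finset.disjoint_left]
    rintro a ha hb
    rw [hF, Finset.mem_map] at ha
    rw [hC, Finset.mem_map] at hb
    obtain ⟨i, _, rfl⟩ := ha
    obtain ⟨j, _, h⟩ := hb
    simp only [Function.Embedding.coeFn_mk] at h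
    exact Sum.inr_ne_inl h
  · simp [hF]
  · simp [hC]
  · -- LP feasibility
    refine ⟨xx N, fun _ => 1, ⟨?_, ?_, ?_, ?_, ?_, ?_, ?_⟩, fun _ _ => rfl, ?_⟩
    · -- x in [0,1]
      rintro p hp q hq
      rw [hF, Finset.mem_map] at hp
      rw [hC, Finset.mem_map] at hq
      obtain ⟨i, _, rfl⟩ := hp
      obtain ⟨j, _, rfl⟩ := hq
      show (if (j:ℕ) = (i:ℕ)+1 then (1:ℝ) else if j = 0 then 1/(N:ℝ) else 0) ∈ _
      have h2 := hNr (N := N) hN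
      have : 0 < 1/(N:ℝ) := by apply one_div_pos.2; linarith
      have : 1/(N:ℝ) ≤ 1 := by
        rw [div_le_one (by linarith)]; linarith
      constructor
      · split
        · norm_num
        · split <;> simp_all <;> linarith
      · split
        · norm_num
        · split <;> simp_all <;> linarith
    · intro i _; constructor <;> norm_num
    · -- facility load ≤ T
      intro p hp
      rw [hF, Finset.mem_map] at hp
      obtain ⟨i, _, rfl⟩ := hp
      simp only [Function.Embedding.coeFn_mk]
      rw [hload i]; simp
    · -- sum y ≤ N
      simp [hF]
    · -- each client fully assigned
      intro q hq
      rw [hC, Finset.mem_map] at hq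
      obtain ⟨j, _, rfl⟩ := hq
      rw [hF, Finset.sum_map]
      have hpt : ∀ i : Fin N, xx N (Sum.inl i) (Sum.inr j) =
          (if (j:ℕ) = (i:ℕ)+1 then (1:ℝ) else if j = 0 then 1/(N:ℝ) else 0) :=
        fun _ => rfl
      simp only [Function.Embedding.coeFn_mk, hpt]
      by_cases h0 : j = 0
      · subst h0
        have : ∀ i : Fin N, ((0:Fin (N+1)):ℕ) ≠ (i:ℕ)+1 := by
          intro i; simp
        rw [Finset.sum_congr rfl (fun i _ => by rw [if_neg (this i), if_pos rfl])]
        rw [Finset.sum_const, Finset.card_univ, Fintype.card_fin, nsmul_eq_mul]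
        field_simp
      · have hj : (j:ℕ) - 1 < N := by
          have := j.isLt
          have : (j:ℕ) ≠ 0 := fun e => h0 (Fin.ext e)
          omega
        have hpt2 : ∀ i : Fin N,
            (if (j:ℕ) = (i:ℕ)+1 then (1:ℝ) else if j = 0 then 1/(N:ℝ) else 0) =
            (if i = (⟨(j:ℕ)-1, hj⟩ : Fin N) then (1:ℝ) else 0) := by
          intro i
          have : (j:ℕ) ≠ 0 := fun e => h0 (Fin.ext e)
          by_cases h : (j:ℕ) = (i:ℕ)+1
          · rw [if_pos h, if_pos (by rw [Fin.ext_iff]; simp; omega)]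
          · rw [if_neg h, if_neg h0, if_neg (by rw [Fin.ext_iff]; simp; omega)]
        rw [Finset.sum_congr rfl (fun i _ => hpt2 i),
          Finset.sum_ite_eq' Finset.univ _ (fun _ => (1:ℝ))]
        simp
    · -- x ≤ y
      rintro p hp q hq
      rw [hF, Finset.mem_map] at hp
      rw [hC, Finset.mem_map] at hq
      obtain ⟨i, _, rfl⟩ := hp
      obtain ⟨j, _, rfl⟩ := hq
      show (if (j:ℕ) = (i:ℕ)+1 then (1:ℝ) else if j = 0 then 1/(N:ℝ) else 0) ≤ 1
      have h2 := hNr (N := N) hN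
      have : 1/(N:ℝ) ≤ 1 := by
        rw [div_le_one (by linarith)]; linarith
      split
      · exact le_refl 1
      · split
        · exact this
        · norm_num
    · -- long distances unused
      intro p _ q _ hlt
      rw [hdist] at hlt
      exact absurd hlt (not_lt.2 (dd_le hN hT _ _))
    · -- facility loads exactly T
      intro p hp
      rw [hF, Finset.mem_map] at hp
      obtain ⟨i, _, rfl⟩ := hp
      show ∑ j ∈ C, dist (Sum.inl i : Xt N) j * xx N (Sum.inl i) j = T
      exact hload i
  · -- integrality gap
    intro S
    -- number of stars is at most N
    have hstars : S.stars.card ≤ N := by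
      have : S.stars.card ≤ F.card := by
        apply Finset.card_le_card_of_injOn Prod.fst (fun p hp => S.fac_mem p hp)
        intro p hp q hq he
        by_contra hne
        exact S.fac_inj p hp q hq hne he
      simpa [hF] using this
    -- some star has at least two clients
    have hbig : ∃ p ∈ S.stars, 2 ≤ p.2.card := by
      by_contra hsmall
      push_neg at hsmall
      have hsub : C ⊆ S.stars.biUnion (fun p => p.2) := by
        intro c hc
        obtain ⟨p, hp, hcp⟩ := S.covers c hc
        exact Finset.mem_biUnion.2 ⟨p, hp, hcp⟩
      have h1 : C.card ≤ ∑ p ∈ S.stars, p.2.card :=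
        le_trans (Finset.card_le_card hsub) (Finset.card_biUnion_le)
      have h2 : ∑ p ∈ S.stars, p.2.card ≤ ∑ _p ∈ S.stars, 1 :=
        Finset.sum_le_sum (fun p hp => by have := hsmall p hp; omega)
      rw [Finset.sum_const, smul_eq_mul, mul_one] at h2
      have h3 : C.card = N + 1 := by simp [hC]
      omega
    obtain ⟨p, hp, hp2⟩ := hbig
    obtain ⟨c1, hc1, c2, hc2, hne⟩ := Finset.one_lt_card.1 (by omega : 1 < p.2.card)
    -- decode the star's facility and two clients
    obtain ⟨i, _, hi⟩ := Finset.mem_map.1 (S.fac_mem p hp)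
    obtain ⟨j1, _, hj1⟩ := Finset.mem_map.1 (S.cli_sub p hp hc1)
    obtain ⟨j2, _, hj2⟩ := Finset.mem_map.1 (S.cli_sub p hp hc2)
    simp only [Function.Embedding.coeFn_mk] at hi hj1 hj2
    -- the sum of the two distances is at least a + T
    have hkey : (2 - 1/(N:ℝ))*T ≤ dist p.1 c1 + dist p.1 c2 := by
      rw [← hi, ← hj1, ← hj2, hdist, hdist, dd_eval, dd_eval]
      have hjne : j1 ≠ j2 := by
        intro e; rw [e] at hj1; exact hne (hj1.symm ▸ hj2.symm ▸ rfl)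
      have haT' := haT (N := N) hN hT
      by_cases h1 : (j1:ℕ) = (i:ℕ)+1
      · have h2 : ¬((j2:ℕ) = (i:ℕ)+1) := by
          intro h2; exact hjne (Fin.ext (by omega))
        rw [if_pos h1, if_neg h2]; ring_nf; linarith
      · rw [if_neg h1]
        split <;> [skip; skip] <;> linarith
    -- conclude via the sup
    have hsum : (2 - 1/(N:ℝ))*T ≤ ∑ c ∈ p.2, dist p.1 c := by
      refine le_trans hkey ?_
      have hsub : ({c1, c2} : Finset (Xt N)) ⊆ p.2 := by
        intro c hc
        rcases Finset.mem_insert.1 hc with h | h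
        · rwa [h]
        · rw [Finset.mem_singleton.1 h]; exact hc2
      calc dist p.1 c1 + dist p.1 c2 = ∑ c ∈ ({c1, c2} : Finset (Xt N)), dist p.1 c := by
            rw [Finset.sum_pair hne]
        _ ≤ ∑ c ∈ p.2, dist p.1 c :=
            Finset.sum_le_sum_of_subset_of_nonneg hsub
              (fun c _ _ => dist_nonneg)
    have hcast : ((∑ c ∈ p.2, nndist p.1 c : ℝ≥0) : ℝ) = ∑ c ∈ p.2, dist p.1 c := by
      push_cast
      exact Finset.sum_congr rfl (fun c _ => coe_nndist _ _)
    have hsup : (∑ c ∈ p.2, nndist p.1 c : ℝ≥0) ≤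
        S.stars.sup fun q => ∑ c ∈ q.2, nndist q.1 c :=
      Finset.le_sup (f := fun q => ∑ c ∈ q.2, nndist q.1 c) hp
    calc (2 - 1/(N:ℝ))*T ≤ ∑ c ∈ p.2, dist p.1 c := hsum
      _ = ((∑ c ∈ p.2, nndist p.1 c : ℝ≥0) : ℝ) := hcast.symm
      _ ≤ S.load := by exact_mod_cast hsup
end
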